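/- Let f be L-smooth, g convex, h convex and differentiable on ℝ^m, M closed and convex, φ = f + g − h. Suppose x⁺ ∈ M satisfies φ̂(x⁺, x) ≤ φ̂(z, x) for all z ∈ M, where φ̂(z, x) = f(z) + g(z) − h(x) − ⟨∇h(x), z − x⟩. Then for every z ∈ M: ⟨∇f(x) − ∇h(x), x − z⟩ + g(x) − g(z) − (L/2)‖z − x‖² ≤ φ(x) − φ(x⁺). -/

import Mathlib

open RealInnerProductSpace

section Aux
variable {F : Type*} [NormedAddCommGroup F] [InnerProductSpace ℝ F] [CompleteSpace F]

lemma line_hasDerivAt (f : F → ℝ) (hf : Differentiable ℝ f) (x v : F) (t : ℝ) :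
    HasDerivAt (fun s : ℝ => f (x + s • v)) ⟪gradient f (x + t • v), v⟫ t := by
  have h1 : HasDerivAt (fun s : ℝ => x + s • v) v t := by
    simpa using ((hasDerivAt_id t).smul_const v).const_add x
  have h2 : HasFDerivAt f (InnerProductSpace.toDual ℝ F (gradient f (x + t • v))) (x + t • v) :=
    (hf _).hasGradientAt
  simpa [Function.comp_def] using h2.comp_hasDerivAt t h1

/-- Convex gradient inequality. -/
lemma convex_grad_ineq (h : F → ℝ) (hh : Differentiable ℝ h)
    (hconv : ConvexOn ℝ Set.univ h) (x z : F) :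
    h x + ⟪gradient h x, z - x⟫ ≤ h z := by
  have hd : HasDerivAt (fun s : ℝ => h (x + s • (z - x))) ⟪gradient h x, z - x⟫ 0 := by
    simpa using line_hasDerivAt h hh x (z - x) 0
  have hslope : ∀ t ∈ Set.Ioo (0:ℝ) 1,
      slope (fun s : ℝ => h (x + s • (z - x))) 0 t ≤ h z - h x := by
    intro t ht
    have hc := hconv.2 (Set.mem_univ x) (Set.mem_univ z)
      (by linarith [ht.2] : (0:ℝ) ≤ 1 - t) ht.1.le (by ring)
    simp only [smul_eq_mul] at hc
    have hxt : (1 - t) • x + t • z = x + t • (z - x) := by module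
    rw [hxt] at hc
    rw [slope_def_field]
    simp only [sub_zero, zero_smul, add_zero]
    rw [div_le_iff₀ ht.1]
    nlinarith [hc]
  have hneBot : (nhdsWithin (0:ℝ) (Set.Ioo 0 1)).NeBot :=
    left_nhdsWithin_Ioo_neBot one_pos
  have htend : Filter.Tendsto (slope (fun s : ℝ => h (x + s • (z - x))) 0)
      (nhdsWithin 0 (Set.Ioo (0:ℝ) 1)) (nhds ⟪gradient h x, z - x⟫) := by
    refine (hasDerivAt_iff_tendsto_slope.mp hd).mono_left (nhdsWithin_mono _ ?_)
    exact fun t ht => Set.mem_compl_singleton_iff.mpr ht.1.ne'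
  have hle := le_of_tendsto htend (Filter.eventually_of_mem self_mem_nhdsWithin hslope)
  linarith

/-- Descent lemma. -/
lemma descent_lemma (f : F → ℝ) (L : ℝ) (hL : 0 ≤ L) (hf : Differentiable ℝ f)
    (hfL : ∀ x y, ‖gradient f x - gradient f y‖ ≤ L * ‖x - y‖) (x z : F) :
    f z ≤ f x + ⟪gradient f x, z - x⟫ + L / 2 * ‖z - x‖ ^ 2 := by
  set v := z - x with hv
  set F' : ℝ → ℝ := fun t => f (x + t • v) - t * ⟪gradient f x, v⟫ - L * t ^ 2 / 2 * ‖v‖ ^ 2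
    with hF
  have hderiv : ∀ t : ℝ, HasDerivAt F'
      (⟪gradient f (x + t • v), v⟫ - ⟪gradient f x, v⟫ - L * t * ‖v‖ ^ 2) t := by
    intro t
    have h1 := line_hasDerivAt f hf x v t
    have h2 : HasDerivAt (fun t : ℝ => t * ⟪gradient f x, v⟫) ⟪gradient f x, v⟫ t := by
      simpa using (hasDerivAt_id t).mul_const ⟪gradient f x, v⟫
    have h3 : HasDerivAt (fun t : ℝ => L * t ^ 2 / 2 * ‖v‖ ^ 2) (L * t * ‖v‖ ^ 2) t := by
      have h4 : HasDerivAt (fun t : ℝ => t ^ 2) (2 * t) t := by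
        simpa using hasDerivAt_pow 2 t
      have := ((h4.const_mul L).div_const 2).mul_const (‖v‖ ^ 2)
      exact this.congr_deriv (by ring)
    exact (h1.sub h2).sub h3
  have hanti : AntitoneOn F' (Set.Icc 0 1) := by
    apply antitoneOn_of_deriv_nonpos (convex_Icc 0 1)
    · exact (Differentiable.continuous (fun t => (hderiv t).differentiableAt)).continuousOn
    · exact fun t _ => (hderiv t).differentiableAt.differentiableWithinAt
    · intro t ht
      rw [interior_Icc] at ht
      rw [(hderiv t).deriv]
      have h4 : ⟪gradient f (x + t • v) - gradient f x, v⟫ ≤ L * t * ‖v‖ ^ 2 := by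
        calc ⟪gradient f (x + t • v) - gradient f x, v⟫
            ≤ ‖gradient f (x + t • v) - gradient f x‖ * ‖v‖ := real_inner_le_norm _ _
          _ ≤ L * ‖(x + t • v) - x‖ * ‖v‖ :=
              mul_le_mul_of_nonneg_right (hfL _ _) (norm_nonneg _)
          _ = L * |t| * ‖v‖ * ‖v‖ := by
              rw [add_sub_cancel_left, norm_smul, Real.norm_eq_abs]; ring
          _ = L * t * ‖v‖ ^ 2 := by rw [abs_of_nonneg ht.1.le]; ring
      rw [inner_sub_left] at h4
      linarith
  have h01 := hanti (Set.left_mem_Icc.mpr one_pos.le) (Set.right_mem_Icc.mpr one_pos.le)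
    one_pos.le
  have hz : x + (1:ℝ) • v = z := by rw [hv]; simp
  have e0 : F' 0 = f x := by simp [hF]
  have e1 : F' 1 = f z - ⟪gradient f x, v⟫ - L / 2 * ‖v‖ ^ 2 := by
    simp only [hF, hz, one_pow, one_mul, mul_one]
  rw [e0, e1] at h01
  linarith

end Aux

/-- key per-iteration inequality for the DCA/BDCA analysis. -/
theorem dca_key_inequality {m : ℕ} (M : Set (EuclideanSpace ℝ (Fin m)))
    (hMclosed : IsClosed M) (hMconv : Convex ℝ M)
    (f g h : EuclideanSpace ℝ (Fin m) → ℝ) (L : ℝ) (hL : 0 ≤ L)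
    (hf : Differentiable ℝ f)
    (hfL : ∀ x y, ‖gradient f x - gradient f y‖ ≤ L * ‖x - y‖)
    (hgconv : ConvexOn ℝ Set.univ g)
    (hh : Differentiable ℝ h) (hhconv : ConvexOn ℝ Set.univ h)
    (x xp : EuclideanSpace ℝ (Fin m)) (hx : x ∈ M) (hxp : xp ∈ M)
    (hmin : ∀ z ∈ M,
      f xp + g xp - h x - ⟪gradient h x, xp - x⟫ ≤
      f z + g z - h x - ⟪gradient h x, z - x⟫) :
    ∀ z ∈ M,
      ⟪gradient f x - gradient h x, x - z⟫ + g x - g z - L / 2 * ‖z - x‖ ^ 2 ≤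
        (f x + g x - h x) - (f xp + g xp - h xp) := by
  intro z hz
  have h1 := convex_grad_ineq h hh hhconv x xp
  have h2 := hmin z hz
  have h3 := descent_lemma f L hL hf hfL x z
  have e : ⟪gradient f x - gradient h x, x - z⟫
      = ⟪gradient h x, z - x⟫ - ⟪gradient f x, z - x⟫ := by
    have : x - z = -(z - x) := by abel
    rw [inner_sub_left, this, inner_neg_right, inner_neg_right]; ring
  linarith
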